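/- Let R = ℂ[x_1,…,x_n], let I ⊆ R be an ideal and let g ∈ R. Then the Macaulay dual space of the colon ideal I : ⟨g⟩ at the origin equals the contraction of the dual space of I by g; that is, D_0[I : ⟨g⟩] = { g∘p : p ∈ D_0[I] } as ℂ-subspaces of R. -/

import Mathlib

open MvPolynomial

noncomputable section

/-- Apolarity pairing `⟨q, f⟩ = ∑ α (coeff α q) * (coeff α f)`. -/
def apair {n : ℕ} (q f : MvPolynomial (Fin n) ℂ) : ℂ :=
  ∑ α ∈ q.support, q.coeff α * f.coeff α

lemma apair_eq_sum {n : ℕ} {q : MvPolynomial (Fin n) ℂ} {s : Finset (Fin n →₀ ℕ)}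
    (h : q.support ⊆ s) (f : MvPolynomial (Fin n) ℂ) :
    apair q f = ∑ α ∈ s, q.coeff α * f.coeff α :=
  Finset.sum_subset h (fun α _ hα => by
    rw [MvPolynomial.notMem_support_iff.mp hα, zero_mul])

/-- The Macaulay dual space `D_0[I]` of an ideal at the origin. -/
def dualSpace {n : ℕ} (I : Ideal (MvPolynomial (Fin n) ℂ)) :
    Submodule ℂ (MvPolynomial (Fin n) ℂ) where
  carrier := {q | ∀ f ∈ I, apair q f = 0}
  zero_mem' := by intro f hf; simp [apair]
  add_mem' := by
    intro a b ha hb f hf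
    have h : apair (a + b) f = apair a f + apair b f := by
      rw [apair_eq_sum (s := a.support ∪ b.support) MvPolynomial.support_add,
        apair_eq_sum (s := a.support ∪ b.support) Finset.subset_union_left,
        apair_eq_sum (s := a.support ∪ b.support) Finset.subset_union_right,
        ← Finset.sum_add_distrib]
      exact Finset.sum_congr rfl fun α _ => by rw [coeff_add, add_mul]
    rw [h, ha f hf, hb f hf, add_zero]
  smul_mem' := by
    intro c q hq f hf
    have h : apair (c • q) f = c * apair q f := by
      rw [apair_eq_sum (s := q.support) MvPolynomial.support_smul, apair, Finset.mul_sum]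
      exact Finset.sum_congr rfl fun α _ => by rw [coeff_smul, smul_eq_mul, mul_assoc]
    rw [h, hq f hf, mul_zero]

open scoped Classical in
/-- The contraction `g ∘ q`, realizing the action of `g` on differential functionals:
`coeff α (contract g q) = ∑ β, coeff β g * coeff (α + β) q`. -/
def contract {n : ℕ} (g q : MvPolynomial (Fin n) ℂ) : MvPolynomial (Fin n) ℂ :=
  ∑ β ∈ g.support, ∑ α ∈ q.support,
    if β ≤ α then monomial (α - β) (g.coeff β * q.coeff α) else 0

/-- The truncated dual space `D_0^k[I]`. -/
def truncDual {n : ℕ} (k : ℕ) (I : Ideal (MvPolynomial (Fin n) ℂ)) :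
    Submodule ℂ (MvPolynomial (Fin n) ℂ) where
  carrier := {q | q ∈ dualSpace I ∧ q.totalDegree ≤ k}
  zero_mem' := ⟨(dualSpace I).zero_mem, by simp⟩
  add_mem' := fun ha hb => ⟨(dualSpace I).add_mem ha.1 hb.1,
    le_trans (MvPolynomial.totalDegree_add _ _) (max_le ha.2 hb.2)⟩
  smul_mem' := fun c q hq => ⟨(dualSpace I).smul_mem c hq.1,
    le_trans (MvPolynomial.totalDegree_smul_le c q) hq.2⟩

namespace MacaulayAux

open MvPolynomial

variable {n : ℕ}

/-! ### degree of an exponent vector -/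

def dg {n : ℕ} (α : Fin n →₀ ℕ) : ℕ := ∑ i, α i

lemma dg_sum_eq (α : Fin n →₀ ℕ) : (α.sum fun _ e => e) = dg α :=
  Finsupp.sum_fintype _ _ (fun _ => rfl)

lemma dg_mono {α β : Fin n →₀ ℕ} (h : α ≤ β) : dg α ≤ dg β :=
  Finset.sum_le_sum fun i _ => h i

lemma dg_add (α β : Fin n →₀ ℕ) : dg (α + β) = dg α + dg β := by
  simp [dg, Finset.sum_add_distrib]

lemma dg_le_totalDegree {p : MvPolynomial (Fin n) ℂ} {α : Fin n →₀ ℕ}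
    (h : α ∈ p.support) : dg α ≤ p.totalDegree := by
  rw [← dg_sum_eq]
  exact MvPolynomial.le_totalDegree (R := ℂ) h

lemma totalDegree_le_iff_dg {p : MvPolynomial (Fin n) ℂ} {m : ℕ} :
    p.totalDegree ≤ m ↔ ∀ α ∈ p.support, dg α ≤ m := by
  constructor
  · intro h α hα
    exact le_trans (dg_le_totalDegree hα) h
  · intro h
    show p.support.sup (fun s => s.sum fun _ e => e) ≤ m
    exact Finset.sup_le fun α hα => by rw [dg_sum_eq]; exact h α hα

/-! ### apair lemmas -/

lemma apair_eq_sum₂ {q f : MvPolynomial (Fin n) ℂ} {s : Finset (Fin n →₀ ℕ)}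
    (h : q.support ∩ f.support ⊆ s) :
    apair q f = ∑ α ∈ s, q.coeff α * f.coeff α := by
  rw [apair_eq_sum (Finset.subset_union_left (s₂ := s)) f]
  symm
  apply Finset.sum_subset Finset.subset_union_right
  intro α hα hαs
  by_cases hq : q.coeff α = 0
  · rw [hq, zero_mul]
  · by_cases hf : f.coeff α = 0
    · rw [hf, mul_zero]
    · exact absurd (h (Finset.mem_inter.2 ⟨MvPolynomial.mem_support_iff.2 hq,
        MvPolynomial.mem_support_iff.2 hf⟩)) hαs

lemma apair_add_right (q f f' : MvPolynomial (Fin n) ℂ) :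
    apair q (f + f') = apair q f + apair q f' := by
  simp [apair, MvPolynomial.coeff_add, mul_add, Finset.sum_add_distrib]

lemma apair_smul_right (c : ℂ) (q f : MvPolynomial (Fin n) ℂ) :
    apair q (c • f) = c * apair q f := by
  simp [apair, MvPolynomial.coeff_smul, Finset.mul_sum, mul_left_comm]

lemma apair_add_left (a b f : MvPolynomial (Fin n) ℂ) :
    apair (a + b) f = apair a f + apair b f := by
  rw [apair_eq_sum (s := a.support ∪ b.support) MvPolynomial.support_add,
    apair_eq_sum (s := a.support ∪ b.support) Finset.subset_union_left,
    apair_eq_sum (s := a.support ∪ b.support) Finset.subset_union_right,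
    ← Finset.sum_add_distrib]
  exact Finset.sum_congr rfl fun α _ => by rw [coeff_add, add_mul]

lemma apair_smul_left (c : ℂ) (q f : MvPolynomial (Fin n) ℂ) :
    apair (c • q) f = c * apair q f := by
  rw [apair_eq_sum (s := q.support) MvPolynomial.support_smul, apair, Finset.mul_sum]
  exact Finset.sum_congr rfl fun α _ => by rw [coeff_smul, smul_eq_mul, mul_assoc]

def apairBil {n : ℕ} : MvPolynomial (Fin n) ℂ →ₗ[ℂ] MvPolynomial (Fin n) ℂ →ₗ[ℂ] ℂ :=
  LinearMap.mk₂ ℂ apair apair_add_left (fun c q f => by simpa using apair_smul_left c q f)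
    apair_add_right (fun c q f => by simpa using apair_smul_right c q f)

@[simp] lemma apairBil_apply (q f : MvPolynomial (Fin n) ℂ) : apairBil q f = apair q f := rfl

lemma apair_sum_right {X : Type*} (q : MvPolynomial (Fin n) ℂ) (s : Finset X)
    (F : X → MvPolynomial (Fin n) ℂ) :
    apair q (∑ x ∈ s, F x) = ∑ x ∈ s, apair q (F x) := by
  exact map_sum (apairBil q) F s

lemma apair_monomial_right (q : MvPolynomial (Fin n) ℂ) (δ : Fin n →₀ ℕ) (c : ℂ) :
    apair q (MvPolynomial.monomial δ c) = q.coeff δ * c := by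
  rw [apair_eq_sum₂ (s := {δ}) ?_]
  · rw [Finset.sum_singleton, MvPolynomial.coeff_monomial, if_pos rfl]
  · intro α hα
    have := Finset.mem_inter.1 hα
    have h2 := MvPolynomial.support_monomial_subset this.2
    simpa using h2

end MacaulayAux
namespace MacaulayAux

open MvPolynomial

variable {n : ℕ}

/-! ### truncation -/

def trunc {n : ℕ} (m : ℕ) : MvPolynomial (Fin n) ℂ →ₗ[ℂ] MvPolynomial (Fin n) ℂ where
  toFun p := AddMonoidAlgebra.ofCoeff (Finsupp.filter (fun α => dg α ≤ m) (AddMonoidAlgebra.coeff p))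
  map_add' p q := congrArg AddMonoidAlgebra.ofCoeff Finsupp.filter_add
  map_smul' c p := congrArg AddMonoidAlgebra.ofCoeff Finsupp.filter_smul

lemma coeff_trunc (m : ℕ) (p : MvPolynomial (Fin n) ℂ) (α : Fin n →₀ ℕ) :
    (trunc m p).coeff α = if dg α ≤ m then p.coeff α else 0 := by
  classical
  exact Finsupp.filter_apply (fun α => dg α ≤ m) (AddMonoidAlgebra.coeff p) α

lemma totalDegree_trunc_le (m : ℕ) (p : MvPolynomial (Fin n) ℂ) :
    (trunc m p).totalDegree ≤ m := by
  rw [totalDegree_le_iff_dg]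
  intro α hα
  have := MvPolynomial.mem_support_iff.1 hα
  rw [coeff_trunc] at this
  by_contra h
  rw [if_neg h] at this
  exact this rfl

lemma apair_trunc_right {m : ℕ} {q : MvPolynomial (Fin n) ℂ} (h : q.totalDegree ≤ m)
    (f : MvPolynomial (Fin n) ℂ) : apair q (trunc m f) = apair q f := by
  apply Finset.sum_congr rfl
  intro α hα
  rw [coeff_trunc, if_pos (le_trans (dg_le_totalDegree hα) h)]

/-! ### the monomial ideals `Mid k` -/

def Mid (n k : ℕ) : Ideal (MvPolynomial (Fin n) ℂ) :=
  Ideal.span ((fun s => MvPolynomial.monomial s (1 : ℂ)) '' {s | k ≤ dg s})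

lemma mem_Mid {k : ℕ} {f : MvPolynomial (Fin n) ℂ} :
    f ∈ Mid n k ↔ ∀ α ∈ f.support, k ≤ dg α := by
  rw [Mid, MvPolynomial.mem_ideal_span_monomial_image]
  constructor
  · intro h α hα
    obtain ⟨s, hs, hle⟩ := h α hα
    exact hs.trans (dg_mono hle)
  · intro h α hα
    exact ⟨α, h α hα, le_rfl⟩

lemma Mid_antitone {k l : ℕ} (h : k ≤ l) : Mid n l ≤ Mid n k :=
  Ideal.span_mono (Set.image_mono fun s hs => le_trans h hs)

lemma sub_trunc_mem_Mid (m : ℕ) (f : MvPolynomial (Fin n) ℂ) :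
    f - trunc m f ∈ Mid n (m + 1) := by
  rw [mem_Mid]
  intro α hα
  have h := MvPolynomial.mem_support_iff.1 hα
  rw [MvPolynomial.coeff_sub, coeff_trunc] at h
  by_contra hc
  rw [if_pos (by omega), sub_self] at h
  exact h rfl

lemma mul_mem_Mid {j k : ℕ} {a b : MvPolynomial (Fin n) ℂ}
    (ha : a ∈ Mid n j) (hb : b ∈ Mid n k) : a * b ∈ Mid n (j + k) := by
  classical
  rw [mem_Mid]
  intro α hα
  have := MvPolynomial.support_mul a b hα
  rw [Finset.mem_add] at this
  obtain ⟨β, hβ, γ, hγ, rfl⟩ := this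
  rw [dg_add]
  exact add_le_add (mem_Mid.1 ha β hβ) (mem_Mid.1 hb γ hγ)

lemma pow_mem_Mid {r : MvPolynomial (Fin n) ℂ} (hr : r ∈ Mid n 1) (k : ℕ) :
    r ^ k ∈ Mid n k := by
  induction k with
  | zero => rw [mem_Mid]; intro α _; exact Nat.zero_le _
  | succ k ih => rw [pow_succ]; exact mul_mem_Mid ih hr

lemma dg_single (i : Fin n) : dg (Finsupp.single i 1) = 1 := by
  simp [dg, Finsupp.single_apply]

lemma monomial_mem_pow_Mid : ∀ (m : ℕ) (s : Fin n →₀ ℕ), m ≤ dg s →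
    MvPolynomial.monomial s (1 : ℂ) ∈ (Mid n 1) ^ m := by
  intro m
  induction m with
  | zero => intro s _; simp [Ideal.one_eq_top]
  | succ m ih =>
    intro s hs
    have hne : ∃ i, s i ≠ 0 := by
      by_contra h
      push_neg at h
      have : dg s = 0 := by simp [dg, h]
      omega
    obtain ⟨i, hi⟩ := hne
    have hle : Finsupp.single i 1 ≤ s := Finsupp.single_le_iff.2 (by omega)
    have hst : Finsupp.single i 1 + (s - Finsupp.single i 1) = s := add_tsub_cancel_of_le hle
    have hdg : dg s = 1 + dg (s - Finsupp.single i 1) := by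
      rw [← hst, dg_add, dg_single, ← hst]
      simp [dg_single]
    have heq : MvPolynomial.monomial s (1 : ℂ) =
        MvPolynomial.monomial (s - Finsupp.single i 1) (1 : ℂ) *
          MvPolynomial.monomial (Finsupp.single i 1) (1 : ℂ) := by
      rw [MvPolynomial.monomial_mul, one_mul, add_comm, hst]
    rw [heq, pow_succ]
    refine Ideal.mul_mem_mul (ih _ (by omega)) ?_
    exact Ideal.subset_span ⟨Finsupp.single i 1, by simp [dg_single], rfl⟩

lemma Mid_le_pow (m : ℕ) : Mid n m ≤ (Mid n 1) ^ m := by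
  rw [Mid, Ideal.span_le]
  rintro x ⟨s, hs, rfl⟩
  exact monomial_mem_pow_Mid m s hs

lemma apair_eq_zero_of_Mid {d : ℕ} {q w : MvPolynomial (Fin n) ℂ}
    (hq : q.totalDegree ≤ d) (hw : w ∈ Mid n (d + 1)) : apair q w = 0 := by
  apply Finset.sum_eq_zero
  intro α hα
  have h1 : dg α ≤ d := le_trans (dg_le_totalDegree hα) hq
  have h2 : w.coeff α = 0 := by
    by_contra h
    have := mem_Mid.1 hw α (MvPolynomial.mem_support_iff.2 h)
    omega
  rw [h2, mul_zero]

end MacaulayAux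
namespace MacaulayAux

open MvPolynomial

variable {n : ℕ}

lemma coeff_contract (g q : MvPolynomial (Fin n) ℂ) (γ : Fin n →₀ ℕ) :
    (contract g q).coeff γ = ∑ β ∈ g.support, g.coeff β * q.coeff (γ + β) := by
  classical
  rw [contract, MvPolynomial.coeff_sum]
  apply Finset.sum_congr rfl
  intro β _
  rw [MvPolynomial.coeff_sum]
  have hterm : ∀ α ∈ q.support,
      (if β ≤ α then MvPolynomial.monomial (α - β) (g.coeff β * q.coeff α) else 0).coeff γ =
        if α = γ + β then g.coeff β * q.coeff α else 0 := by
    intro α _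
    by_cases hαβ : α = γ + β
    · subst hαβ
      rw [if_pos le_add_self, if_pos rfl, MvPolynomial.coeff_monomial,
        if_pos (add_tsub_cancel_right γ β)]
    · rw [if_neg hαβ]
      by_cases hle : β ≤ α
      · rw [if_pos hle, MvPolynomial.coeff_monomial, if_neg]
        intro hc
        exact hαβ (by rw [← hc, tsub_add_cancel_of_le hle])
      · rw [if_neg hle, MvPolynomial.coeff_zero]
  rw [Finset.sum_congr rfl hterm, Finset.sum_ite_eq' q.support (γ + β)
    (fun α => g.coeff β * q.coeff α)]
  by_cases h : γ + β ∈ q.support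
  · rw [if_pos h]
  · rw [if_neg h, MvPolynomial.notMem_support_iff.1 h, mul_zero]

def contractL {n : ℕ} (g : MvPolynomial (Fin n) ℂ) :
    MvPolynomial (Fin n) ℂ →ₗ[ℂ] MvPolynomial (Fin n) ℂ where
  toFun := contract g
  map_add' p q := MvPolynomial.ext _ _ fun γ => by
    simp [coeff_contract, MvPolynomial.coeff_add, mul_add, Finset.sum_add_distrib]
  map_smul' c p := MvPolynomial.ext _ _ fun γ => by
    simp [coeff_contract, MvPolynomial.coeff_smul, Finset.mul_sum, mul_left_comm]

@[simp] lemma contractL_apply (g q : MvPolynomial (Fin n) ℂ) : contractL g q = contract g q := rfl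

lemma totalDegree_contract_le (g q : MvPolynomial (Fin n) ℂ) :
    (contract g q).totalDegree ≤ q.totalDegree := by
  rw [totalDegree_le_iff_dg]
  intro γ hγ
  have h := MvPolynomial.mem_support_iff.1 hγ
  rw [coeff_contract] at h
  obtain ⟨β, -, hβ⟩ := Finset.exists_ne_zero_of_sum_ne_zero h
  have hqc : q.coeff (γ + β) ≠ 0 := fun hc => hβ (by rw [hc, mul_zero])
  calc dg γ ≤ dg (γ + β) := dg_mono le_self_add
  _ ≤ q.totalDegree := dg_le_totalDegree (MvPolynomial.mem_support_iff.2 hqc)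

lemma apair_contract (g q f : MvPolynomial (Fin n) ℂ) :
    apair (contract g q) f = apair q (g * f) := by
  have hL : apair (contract g q) f =
      ∑ γ ∈ f.support, ∑ β ∈ g.support, g.coeff β * q.coeff (γ + β) * f.coeff γ := by
    rw [apair_eq_sum₂ (s := f.support) Finset.inter_subset_right]
    exact Finset.sum_congr rfl fun γ _ => by rw [coeff_contract, Finset.sum_mul]
  have hgf : g * f = ∑ β ∈ g.support, ∑ γ ∈ f.support,
      MvPolynomial.monomial (β + γ) (g.coeff β * f.coeff γ) := by
    conv_lhs => rw [MvPolynomial.as_sum g, MvPolynomial.as_sum f]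
    rw [Finset.sum_mul_sum]
    exact Finset.sum_congr rfl fun β _ => Finset.sum_congr rfl fun γ _ =>
      MvPolynomial.monomial_mul
  rw [hL, hgf, apair_sum_right, Finset.sum_comm]
  apply Finset.sum_congr rfl
  intro γ _
  rw [apair_sum_right]
  apply Finset.sum_congr rfl
  intro β _
  rw [apair_monomial_right, add_comm β γ]
  ring

end MacaulayAux
namespace MacaulayAux

open MvPolynomial

variable {n : ℕ}

abbrev E (n m : ℕ) : Submodule ℂ (MvPolynomial (Fin n) ℂ) :=
  MvPolynomial.restrictTotalDegree (Fin n) ℂ m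

/-- truncated multiplication by `g` on `E n m`. -/
def SE (g : MvPolynomial (Fin n) ℂ) (m : ℕ) : E n m →ₗ[ℂ] E n m :=
  LinearMap.codRestrict (E n m)
    ((trunc m ∘ₗ LinearMap.mulLeft ℂ g) ∘ₗ (E n m).subtype)
    (fun x => by
      rw [MvPolynomial.mem_restrictTotalDegree]
      exact totalDegree_trunc_le m _)

lemma SE_coe (g : MvPolynomial (Fin n) ℂ) (m : ℕ) (f : E n m) :
    (SE g m f : MvPolynomial (Fin n) ℂ) = trunc m (g * (f : MvPolynomial (Fin n) ℂ)) := rfl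

/-- contraction by `g` on `E n m`. -/
def TE (g : MvPolynomial (Fin n) ℂ) (m : ℕ) : E n m →ₗ[ℂ] E n m :=
  LinearMap.codRestrict (E n m) ((contractL g) ∘ₗ (E n m).subtype)
    (fun x => by
      rw [MvPolynomial.mem_restrictTotalDegree]
      exact le_trans (totalDegree_contract_le _ _)
        ((MvPolynomial.mem_restrictTotalDegree _ _ _).1 x.2))

lemma TE_coe (g : MvPolynomial (Fin n) ℂ) (m : ℕ) (f : E n m) :
    (TE g m f : MvPolynomial (Fin n) ℂ) = contract g (f : MvPolynomial (Fin n) ℂ) := rfl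

/-- the apolarity pairing as a map into the dual of `E n m`. -/
def Phi (n m : ℕ) : E n m →ₗ[ℂ] Module.Dual ℂ (E n m) where
  toFun p := (apairBil (p : MvPolynomial (Fin n) ℂ)).comp (E n m).subtype
  map_add' p q := by ext f; simp
  map_smul' c p := by ext f; simp

lemma Phi_apply (m : ℕ) (p f : E n m) :
    Phi n m p f = apair (p : MvPolynomial (Fin n) ℂ) (f : MvPolynomial (Fin n) ℂ) := rfl

lemma Phi_injective (m : ℕ) : Function.Injective (Phi n m) := by
  rw [injective_iff_map_eq_zero]
  intro p hp
  ext1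
  rw [Submodule.coe_zero]
  apply MvPolynomial.ext
  intro α
  rw [MvPolynomial.coeff_zero]
  by_cases hα : α ∈ (p : MvPolynomial (Fin n) ℂ).support
  · have hmem : MvPolynomial.monomial α (1 : ℂ) ∈ E n m := by
      rw [MvPolynomial.mem_restrictTotalDegree, MvPolynomial.totalDegree_monomial α
        (one_ne_zero), dg_sum_eq]
      exact le_trans (dg_le_totalDegree hα)
        ((MvPolynomial.mem_restrictTotalDegree _ _ _).1 p.2)
    have := congrFun (congrArg DFunLike.coe hp) ⟨_, hmem⟩
    rw [Phi_apply, apair_monomial_right, mul_one] at this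
    exact this
  · exact MvPolynomial.notMem_support_iff.1 hα

lemma Phi_surjective (m : ℕ) : Function.Surjective (Phi n m) := by
  have : FiniteDimensional ℂ (E n m) := inferInstance
  exact (LinearMap.injective_iff_surjective_of_finrank_eq_finrank
    (Subspace.dual_finrank_eq).symm).1 (Phi_injective m)

lemma Phi_adjoint (g : MvPolynomial (Fin n) ℂ) (m : ℕ) (u : E n m) :
    Phi n m (TE g m u) = (SE g m).dualMap (Phi n m u) := by
  ext f
  rw [Phi_apply, LinearMap.dualMap_apply, Phi_apply, TE_coe, SE_coe, apair_contract,
    apair_trunc_right ((MvPolynomial.mem_restrictTotalDegree _ _ _).1 u.2)]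

/-- The key finite-dimensional duality step. -/
lemma key (g : MvPolynomial (Fin n) ℂ) (m : ℕ) (W : Submodule ℂ (E n m)) (q : E n m)
    (hq : ∀ f : E n m, SE g m f ∈ W →
      apair (q : MvPolynomial (Fin n) ℂ) (f : MvPolynomial (Fin n) ℂ) = 0) :
    ∃ p : E n m, (∀ w ∈ W, apair (p : MvPolynomial (Fin n) ℂ) (w : MvPolynomial (Fin n) ℂ) = 0)
      ∧ TE g m p = q := by
  have : FiniteDimensional ℂ (E n m) := inferInstance
  have h1 : Phi n m q ∈ (LinearMap.ker (W.mkQ ∘ₗ SE g m)).dualAnnihilator := by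
    rw [Submodule.mem_dualAnnihilator]
    intro f hf
    rw [LinearMap.mem_ker, LinearMap.comp_apply, Submodule.mkQ_apply,
      Submodule.Quotient.mk_eq_zero] at hf
    exact hq f hf
  rw [← LinearMap.range_dualMap_eq_dualAnnihilator_ker] at h1
  obtain ⟨ξ, hξ⟩ := h1
  have hsplit : (W.mkQ ∘ₗ SE g m).dualMap ξ = (SE g m).dualMap (W.mkQ.dualMap ξ) := rfl
  obtain ⟨p, hp⟩ := Phi_surjective m (W.mkQ.dualMap ξ)
  refine ⟨p, ?_, ?_⟩
  · intro w hw
    have : Phi n m p w = 0 := by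
      rw [hp, LinearMap.dualMap_apply, Submodule.mkQ_apply,
        (Submodule.Quotient.mk_eq_zero W).2 hw, map_zero]
    rwa [Phi_apply] at this
  · apply Phi_injective m
    rw [Phi_adjoint, hp, ← hsplit, hξ]

end MacaulayAux
namespace MacaulayAux

open MvPolynomial

variable {n : ℕ}

lemma quotient_finite (d : ℕ) :
    Module.Finite ℂ (MvPolynomial (Fin n) ℂ ⧸ ((Mid n (d+1)).restrictScalars ℂ)) := by
  classical
  set Z := (Mid n (d+1)).restrictScalars ℂ with hZ
  refine ⟨⟨Finset.image (fun α => Z.mkQ (MvPolynomial.monomial α (1:ℂ)))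
    (Finset.Iic (Finsupp.equivFunOnFinite.symm fun _ => d)), ?_⟩⟩
  rw [eq_top_iff]
  rintro x -
  obtain ⟨p, rfl⟩ := Submodule.mkQ_surjective Z x
  have h1 : Z.mkQ p = Z.mkQ (trunc d p) := by
    rw [← sub_eq_zero, ← map_sub, Submodule.mkQ_apply, Submodule.Quotient.mk_eq_zero]
    exact sub_trunc_mem_Mid d p
  have h3 : Z.mkQ (trunc d p) =
      ∑ α ∈ (trunc d p).support, Z.mkQ (MvPolynomial.monomial α ((trunc d p).coeff α)) := by
    conv_lhs => rw [MvPolynomial.as_sum (trunc d p)]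
    rw [map_sum]
  rw [h1, h3]
  apply Submodule.sum_mem
  intro α hα
  have hdg : dg α ≤ d := le_trans (dg_le_totalDegree hα) (totalDegree_trunc_le d p)
  have h2 : (MvPolynomial.monomial α) ((trunc d p).coeff α) =
      ((trunc d p).coeff α) • MvPolynomial.monomial α (1:ℂ) := by
    rw [MvPolynomial.smul_monomial, smul_eq_mul, mul_one]
  rw [h2, map_smul]
  apply Submodule.smul_mem
  apply Submodule.subset_span
  simp only [Finset.coe_image, Set.mem_image]
  refine ⟨α, ?_, rfl⟩
  rw [Finset.mem_coe, Finset.mem_Iic]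
  intro i
  have : α i ≤ dg α := Finset.single_le_sum (f := fun j => α j) (fun _ _ => Nat.zero_le _)
    (Finset.mem_univ i)
  simpa using le_trans this hdg

set_option maxHeartbeats 1000000 in
lemma master (I : Ideal (MvPolynomial (Fin n) ℂ)) (g q : MvPolynomial (Fin n) ℂ) (d : ℕ)
    (hd : q.totalDegree ≤ d)
    (hq : ∀ f ∈ Submodule.colon I (Ideal.span {g}), apair q f = 0) :
    ∃ M : ℕ, ∀ m, M ≤ m →
      ∀ f ∈ Submodule.colon (I ⊔ Mid n (m+1)) (Ideal.span {g}), apair q f = 0 := by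
  classical
  set C : ℕ → Ideal (MvPolynomial (Fin n) ℂ) :=
    fun m => Submodule.colon (I ⊔ Mid n (m+1)) (Ideal.span {g}) ⊔ Mid n (d+1) with hCdef
  have hmono : ∀ {a b : ℕ}, a ≤ b → C b ≤ C a := by
    intro a b hab
    apply sup_le_sup_right
    intro x hx
    rw [Ideal.mem_colon_span_singleton] at hx ⊢
    exact sup_le_sup_left (Mid_antitone (by omega)) I hx
  -- stabilization of the chain C
  set Z : Submodule ℂ (MvPolynomial (Fin n) ℂ) := (Mid n (d+1)).restrictScalars ℂ with hZ
  haveI := quotient_finite (n := n) d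
  have hZle : ∀ m, Z ≤ (C m).restrictScalars ℂ := by
    intro m x hx
    exact (le_sup_right : Mid n (d+1) ≤ C m) hx
  have hst : ∃ M : ℕ, ∀ m, M ≤ m → C m = C M := by
    set D : ℕ →o (Submodule ℂ (MvPolynomial (Fin n) ℂ ⧸ Z))ᵒᵈ :=
      ⟨fun m => Submodule.map Z.mkQ ((C m).restrictScalars ℂ),
        fun a b hab => Submodule.map_mono (fun x hx => hmono hab hx)⟩ with hD
    obtain ⟨M, hM⟩ := IsArtinian.monotone_stabilizes D
    refine ⟨M, fun m hm => ?_⟩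
    have hcm : ∀ k, Submodule.comap Z.mkQ (Submodule.map Z.mkQ ((C k).restrictScalars ℂ)) =
        (C k).restrictScalars ℂ := by
      intro k
      rw [Submodule.comap_map_eq, Submodule.ker_mkQ, sup_eq_left.2 (hZle k)]
    have h2 : ((C m).restrictScalars ℂ) = ((C M).restrictScalars ℂ) := by
      rw [← hcm m, ← hcm M]
      exact congrArg _ (hM m hm).symm
    exact Submodule.restrictScalars_injective ℂ _ _ h2
  obtain ⟨M, hM⟩ := hst
  refine ⟨M, fun m hm f hf => ?_⟩
  have hfm : f ∈ C m := Ideal.mem_sup_left hf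
  have hfC : ∀ i : ℕ, f ∈ C i := by
    intro i
    rcases le_total i m with h | h
    · exact hmono h hfm
    · rw [hM i (le_trans hm h), ← hM m hm]
      exact hfm
  set J : Ideal (MvPolynomial (Fin n) ℂ) := I ⊔ (Ideal.span {g} * Mid n (d+1)) with hJdef
  have hJ : ∀ i : ℕ, g * f ∈ J ⊔ Mid n i := by
    intro i
    obtain ⟨u, hu, w, hw, huw⟩ := Submodule.mem_sup.1 (hfC i)
    have hgu : u * g ∈ I ⊔ Mid n (i+1) := Ideal.mem_colon_span_singleton.1 hu
    obtain ⟨a, ha, b, hb, hab⟩ := Submodule.mem_sup.1 hgu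
    have hgw : g * w ∈ Ideal.span {g} * Mid n (d+1) :=
      Ideal.mul_mem_mul (Ideal.mem_span_singleton_self g) hw
    have hsplit : g * f = (a + g * w) + b := by
      have h1 : g * u = a + b := by rw [mul_comm]; exact hab.symm
      rw [← huw, mul_add, h1]; ring
    rw [hsplit]
    refine Submodule.add_mem_sup ?_ (Mid_antitone (by omega) hb)
    exact Ideal.add_mem _ (Ideal.mem_sup_left ha) (Ideal.mem_sup_right hgw)
  haveI : Module.Finite (MvPolynomial (Fin n) ℂ) (MvPolynomial (Fin n) ℂ ⧸ J) :=
    Module.Finite.of_surjective J.mkQ (Submodule.mkQ_surjective J)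
  have hx : J.mkQ (g * f) ∈
      (⨅ i : ℕ, (Mid n 1) ^ i • (⊤ : Submodule (MvPolynomial (Fin n) ℂ) (MvPolynomial (Fin n) ℂ ⧸ J))) := by
    rw [Submodule.mem_iInf]
    intro i
    obtain ⟨j, hj, v, hv, hjv⟩ := Submodule.mem_sup.1 (hJ i)
    have h1 : J.mkQ (g * f) = J.mkQ v := by
      rw [← sub_eq_zero, ← map_sub, Submodule.mkQ_apply, Submodule.Quotient.mk_eq_zero]
      have : g * f - v = j := by rw [← hjv]; ring
      rw [this]; exact hj
    have h2 : J.mkQ v = v • J.mkQ (1 : MvPolynomial (Fin n) ℂ) := by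
      rw [← map_smul, smul_eq_mul, mul_one]
    rw [h1, h2]
    exact Submodule.smul_mem_smul (Mid_le_pow i hv) Submodule.mem_top
  rw [Ideal.mem_iInf_smul_pow_eq_bot_iff] at hx
  obtain ⟨r, hr⟩ := hx
  have hrJ : (1 - (r : MvPolynomial (Fin n) ℂ)) * (g * f) ∈ J := by
    have h0 : J.mkQ ((1 - (r : MvPolynomial (Fin n) ℂ)) * (g * f)) = 0 := by
      have he : (1 - (r : MvPolynomial (Fin n) ℂ)) * (g * f)
          = g * f - (r : MvPolynomial (Fin n) ℂ) • (g * f) := by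
        rw [smul_eq_mul]; ring
      rw [he, map_sub, map_smul, hr, sub_self]
    rwa [Submodule.mkQ_apply, Submodule.Quotient.mk_eq_zero] at h0
  obtain ⟨u', hu', z, hz, huz⟩ := Submodule.mem_sup.1 hrJ
  obtain ⟨t, ht, hgt⟩ := Ideal.mem_span_singleton_mul.1 hz
  have h5 : ((1 - (r : MvPolynomial (Fin n) ℂ)) * f - t) * g ∈ I := by
    have he : ((1 - (r : MvPolynomial (Fin n) ℂ)) * f - t) * g
        = (1 - (r : MvPolynomial (Fin n) ℂ)) * (g * f) - g * t := by ring
    rw [he, ← huz, hgt]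
    have he2 : u' + z - z = u' := by ring
    rw [he2]; exact hu'
  set L := Submodule.colon I (Ideal.span {g}) ⊔ Mid n (d+1) with hLdef
  have h6 : (1 - (r : MvPolynomial (Fin n) ℂ)) * f ∈ L := by
    have he : (1 - (r : MvPolynomial (Fin n) ℂ)) * f
        = ((1 - (r : MvPolynomial (Fin n) ℂ)) * f - t) + t := by ring
    rw [he]
    exact Submodule.add_mem_sup (Ideal.mem_colon_span_singleton.2 h5) ht
  have hco : IsCoprime (1 - (r : MvPolynomial (Fin n) ℂ))
      ((r : MvPolynomial (Fin n) ℂ) ^ (d+1)) := by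
    have hbase : IsCoprime (1 - (r : MvPolynomial (Fin n) ℂ)) (r : MvPolynomial (Fin n) ℂ) :=
      ⟨1, 1, by ring⟩
    exact hbase.pow_right
  obtain ⟨s, t', hst'⟩ := hco
  have h7 : f ∈ L := by
    have hf2 : f = s * ((1 - (r : MvPolynomial (Fin n) ℂ)) * f)
        + (t' * (r : MvPolynomial (Fin n) ℂ) ^ (d+1)) * f := by
      calc f = (s * (1 - (r : MvPolynomial (Fin n) ℂ))
            + t' * (r : MvPolynomial (Fin n) ℂ) ^ (d+1)) * f := by rw [hst', one_mul]
      _ = _ := by ring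
    rw [hf2]
    refine Ideal.add_mem _ (Ideal.mul_mem_left _ s h6) ?_
    refine Ideal.mul_mem_right f _ (Ideal.mul_mem_left _ t' ?_)
    exact (le_sup_right : Mid n (d+1) ≤ L) (pow_mem_Mid r.2 (d+1))
  obtain ⟨u, hu, w, hw, huw⟩ := Submodule.mem_sup.1 h7
  rw [← huw, apair_add_right, hq u hu, apair_eq_zero_of_Mid hd hw, add_zero]

end MacaulayAux
open MacaulayAux in
/-- `D_0[I : ⟨g⟩] = g ∘ D_0[I]`. -/
theorem dualSpace_colon (n : ℕ) (I : Ideal (MvPolynomial (Fin n) ℂ))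
    (g : MvPolynomial (Fin n) ℂ) :
    (dualSpace (Submodule.colon I (Ideal.span {g})) : Set (MvPolynomial (Fin n) ℂ)) =
      contract g '' (dualSpace I : Set (MvPolynomial (Fin n) ℂ)) := by
  classical
  ext q
  simp only [Set.mem_image, SetLike.mem_coe]
  constructor
  · intro hq
    have hq' : ∀ f ∈ Submodule.colon I (Ideal.span {g}), apair q f = 0 := hq
    obtain ⟨M, hM⟩ := master I g q q.totalDegree le_rfl hq'
    set m := max M q.totalDegree with hmdef
    have hdm : q.totalDegree ≤ m := le_max_right M q.totalDegree
    set qE : E n m := ⟨q, (MvPolynomial.mem_restrictTotalDegree _ _ _).2 hdm⟩ with hqE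
    set W : Submodule ℂ (E n m) :=
      Submodule.comap (E n m).subtype
        ((I.restrictScalars ℂ) ⊔ ((Mid n (m+1)).restrictScalars ℂ)) with hW
    have hkey := key g m W qE ?hyp
    case hyp =>
      intro f hf
      have hf' : trunc m (g * (f : MvPolynomial (Fin n) ℂ)) ∈
          (I.restrictScalars ℂ) ⊔ ((Mid n (m+1)).restrictScalars ℂ) := hf
      obtain ⟨a, ha, b, hb, hab⟩ := Submodule.mem_sup.1 hf'
      have hins : g * (f : MvPolynomial (Fin n) ℂ) ∈ I ⊔ Mid n (m+1) := by
        have he : g * (f : MvPolynomial (Fin n) ℂ) = a +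
            (b + (g * (f : MvPolynomial (Fin n) ℂ)
              - trunc m (g * (f : MvPolynomial (Fin n) ℂ)))) := by
          rw [← hab]; ring
        rw [he]
        refine Submodule.add_mem_sup ha (Ideal.add_mem _ hb ?_)
        exact sub_trunc_mem_Mid m _
      apply hM m (le_max_left M q.totalDegree)
      rw [Ideal.mem_colon_span_singleton, mul_comm]
      exact hins
    obtain ⟨p, hpW, hTp⟩ := hkey
    refine ⟨(p : MvPolynomial (Fin n) ℂ), ?_, ?_⟩
    · intro f hfI
      have hp2 : (p : MvPolynomial (Fin n) ℂ).totalDegree ≤ m :=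
        (MvPolynomial.mem_restrictTotalDegree _ _ _).1 p.2
      have hVm : trunc m f ∈ E n m :=
        (MvPolynomial.mem_restrictTotalDegree _ _ _).2 (totalDegree_trunc_le m f)
      have hWm : (⟨trunc m f, hVm⟩ : E n m) ∈ W := by
        show trunc m f ∈ (I.restrictScalars ℂ) ⊔ ((Mid n (m+1)).restrictScalars ℂ)
        have he : trunc m f = f + (-(f - trunc m f)) := by ring
        rw [he]
        exact Submodule.add_mem_sup hfI (neg_mem (sub_trunc_mem_Mid m f))
      have h1 := hpW _ hWm
      rwa [apair_trunc_right hp2 f] at h1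
    · have h2 := congrArg Subtype.val hTp
      rwa [TE_coe] at h2
  · rintro ⟨p, hp, rfl⟩
    intro f hf
    rw [apair_contract]
    apply hp
    have h3 := Ideal.mem_colon_span_singleton.1 hf
    rwa [mul_comm] at h3
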